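/- Bennett's inequality: Let X₁, …, Xₙ be independent real-valued random variables with E[Xᵢ] = 0 and |Xᵢ| ≤ 1 almost surely, and let σ² = (1/n) Σᵢ₌₁ⁿ Var[Xᵢ] > 0. Then for every t > 0, P( Σᵢ₌₁ⁿ Xᵢ > t ) ≤ exp( −nσ² h( t/(nσ²) ) ), where h(u) = (1 + u) log(1 + u) − u. -/

import Mathlib

open MeasureTheory ProbabilityTheory Real

private lemma exp_series (y : ℝ) :
    Real.exp y = 1 + y + ∑' n : ℕ, y ^ (n + 2) / ((n + 2).factorial : ℝ) := by
  have hs0 : Summable (fun n : ℕ => y ^ n / (n.factorial : ℝ)) := Real.summable_pow_div_factorial y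
  have hs1 : Summable (fun n : ℕ => y ^ (n + 1) / ((n + 1).factorial : ℝ)) :=
    hs0.comp_injective (add_left_injective 1)
  have h0 : Real.exp y = ∑' n : ℕ, y ^ n / (n.factorial : ℝ) := by
    rw [Real.exp_eq_exp_ℝ]; exact congrFun NormedSpace.exp_eq_tsum_div y
  rw [h0, Summable.tsum_eq_zero_add hs0, Summable.tsum_eq_zero_add hs1]
  simp [Nat.factorial]
  ring

/-- Pointwise inequality: for `s ≥ 0` and `|x| ≤ 1`,
`exp (s*x) ≤ 1 + s*x + x² (exp s − s − 1)`. -/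
private lemma key_pointwise {s x : ℝ} (hs : 0 ≤ s) (hx : |x| ≤ 1) :
    Real.exp (s * x) ≤ 1 + s * x + x ^ 2 * (Real.exp s - s - 1) := by
  have hsum1 : Summable (fun n : ℕ => (s * x) ^ (n + 2) / ((n + 2).factorial : ℝ)) :=
    (Real.summable_pow_div_factorial (s * x)).comp_injective (add_left_injective 2)
  have hsum2 : Summable (fun n : ℕ => x ^ 2 * (s ^ (n + 2) / ((n + 2).factorial : ℝ))) :=
    ((Real.summable_pow_div_factorial s).comp_injective (add_left_injective 2)).mul_left _
  have hterm : ∀ n : ℕ, (s * x) ^ (n + 2) / ((n + 2).factorial : ℝ) ≤ x ^ 2 * (s ^ (n + 2) / ((n + 2).factorial : ℝ)) := by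
    intro n
    have hxpow : x ^ (n + 2) ≤ x ^ 2 := by
      calc x ^ (n + 2) ≤ |x ^ (n + 2)| := le_abs_self _
        _ = |x| ^ (n + 2) := by rw [abs_pow]
        _ ≤ |x| ^ 2 := pow_le_pow_of_le_one (abs_nonneg x) hx (by omega)
        _ = x ^ 2 := sq_abs x
    have : (s * x) ^ (n + 2) ≤ x ^ 2 * s ^ (n + 2) := by
      rw [mul_pow]
      calc s ^ (n + 2) * x ^ (n + 2) ≤ s ^ (n + 2) * x ^ 2 :=
            mul_le_mul_of_nonneg_left hxpow (pow_nonneg hs _)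
        _ = x ^ 2 * s ^ (n + 2) := mul_comm _ _
    have hfac : (0:ℝ) < ((n + 2).factorial : ℝ) := by positivity
    calc (s * x) ^ (n + 2) / ((n + 2).factorial : ℝ) ≤ x ^ 2 * s ^ (n + 2) / ((n + 2).factorial : ℝ) := by
          gcongr
      _ = x ^ 2 * (s ^ (n + 2) / ((n + 2).factorial : ℝ)) := by ring
  have hsum_le : (∑' n : ℕ, (s * x) ^ (n + 2) / ((n + 2).factorial : ℝ)) ≤
      ∑' n : ℕ, x ^ 2 * (s ^ (n + 2) / ((n + 2).factorial : ℝ)) :=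
    Summable.tsum_le_tsum hterm hsum1 hsum2
  have h2 : Real.exp s - s - 1 = ∑' n : ℕ, s ^ (n + 2) / ((n + 2).factorial : ℝ) := by
    rw [exp_series s]; ring
  calc Real.exp (s * x) = 1 + s * x + ∑' n : ℕ, (s * x) ^ (n + 2) / ((n + 2).factorial : ℝ) := exp_series _
    _ ≤ 1 + s * x + ∑' n : ℕ, x ^ 2 * (s ^ (n + 2) / ((n + 2).factorial : ℝ)) := by linarith
    _ = 1 + s * x + x ^ 2 * ∑' n : ℕ, s ^ (n + 2) / ((n + 2).factorial : ℝ) := by rw [tsum_mul_left]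
    _ = 1 + s * x + x ^ 2 * (Real.exp s - s - 1) := by rw [← h2]


private lemma mgf_bound {Ω : Type*} {mΩ : MeasurableSpace Ω} (μ : Measure Ω)
    [IsProbabilityMeasure μ] (Y : Ω → ℝ) (hm : Measurable Y)
    (hmean : ∫ ω, Y ω ∂μ = 0) (hb : ∀ᵐ ω ∂μ, |Y ω| ≤ 1) {s : ℝ} (hs : 0 ≤ s) :
    mgf Y μ s ≤ Real.exp (variance Y μ * (Real.exp s - s - 1)) := by
  have hbIcc : ∀ᵐ ω ∂μ, Y ω ∈ Set.Icc (-1 : ℝ) 1 := by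
    filter_upwards [hb] with ω hω using abs_le.mp hω
  have hmem2 : MemLp Y 2 μ := memLp_of_bounded hbIcc hm.aestronglyMeasurable 2
  have hintY : Integrable Y μ := (memLp_of_bounded hbIcc hm.aestronglyMeasurable 1).integrable le_rfl
  have hintY2 : Integrable (fun ω => Y ω ^ 2) μ := by
    have := hmem2.integrable_sq
    simpa [sq] using this
  have hintexp : Integrable (fun ω => Real.exp (s * Y ω)) μ := by
    refine (MemLp.of_bound ((hm.const_mul s).exp).aestronglyMeasurable (Real.exp s) ?_).integrable le_rfl
    filter_upwards [hb] with ω hω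
    rw [Real.norm_eq_abs, abs_of_pos (Real.exp_pos _), Real.exp_le_exp]
    calc s * Y ω ≤ s * 1 := mul_le_mul_of_nonneg_left ((le_abs_self _).trans hω) hs
      _ = s := mul_one s
  set g : ℝ := Real.exp s - s - 1 with hg
  have hintRHS : Integrable (fun ω => 1 + s * Y ω + Y ω ^ 2 * g) μ :=
    ((integrable_const (1:ℝ)).add (hintY.const_mul s)).add (hintY2.mul_const g)
  have hle : mgf Y μ s ≤ ∫ ω, (1 + s * Y ω + Y ω ^ 2 * g) ∂μ := by
    refine integral_mono_ae hintexp hintRHS ?_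
    filter_upwards [hb] with ω hω using key_pointwise hs hω
  have hvar : variance Y μ = ∫ ω, Y ω ^ 2 ∂μ := by
    rw [variance_eq_sub hmem2]
    simp [hmean]
  have hint_eq : ∫ ω, (1 + s * Y ω + Y ω ^ 2 * g) ∂μ = 1 + variance Y μ * g := by
    have h1 : Integrable (fun ω => 1 + s * Y ω) μ := (integrable_const _).add (hintY.const_mul s)
    have e1 : ∫ ω, ((1 + s * Y ω) + Y ω ^ 2 * g) ∂μ
        = (∫ ω, (1 + s * Y ω) ∂μ) + ∫ ω, Y ω ^ 2 * g ∂μ := integral_add h1 (hintY2.mul_const g)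
    have e2 : ∫ ω, ((1:ℝ) + s * Y ω) ∂μ = (∫ _ω, (1:ℝ) ∂μ) + ∫ ω, s * Y ω ∂μ :=
      integral_add (integrable_const (1:ℝ)) (hintY.const_mul s)
    rw [e1, e2, integral_const, integral_const_mul, integral_mul_const, hmean, hvar]
    simp
  calc mgf Y μ s ≤ 1 + variance Y μ * g := by rw [← hint_eq]; exact hle
    _ ≤ Real.exp (variance Y μ * g) := by linarith [Real.add_one_le_exp (variance Y μ * g)]

theorem bennett_inequality {Ω : Type*} {mΩ : MeasurableSpace Ω}
    (μ : Measure Ω) [IsProbabilityMeasure μ] (n : ℕ) (X : Fin n → Ω → ℝ)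
    (hmeas : ∀ i, Measurable (X i))
    (hindep : iIndepFun X μ)
    (hmean : ∀ i, ∫ ω, X i ω ∂μ = 0)
    (hbdd : ∀ i, ∀ᵐ ω ∂μ, |X i ω| ≤ 1)
    (σ2 : ℝ) (hσ2 : σ2 = (1 / n) * ∑ i, variance (X i) μ) (hσpos : 0 < σ2)
    (h : ℝ → ℝ) (hh : ∀ u, h u = (1 + u) * Real.log (1 + u) - u)
    (t : ℝ) (ht : 0 < t) :
    (μ {ω | t < ∑ i, X i ω}).toReal ≤
      Real.exp (-(n * σ2) * h (t / (n * σ2))) := by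
  -- n is positive
  have hn : 0 < n := by
    rcases Nat.eq_zero_or_pos n with h0 | h0
    · exfalso; subst h0; simp at hσ2; simp [hσ2] at hσpos
    · exact h0
  set v : ℝ := (n : ℝ) * σ2 with hvdef
  have hv : 0 < v := by
    have : (0:ℝ) < n := Nat.cast_pos.mpr hn
    positivity
  have hvsum : v = ∑ i, variance (X i) μ := by
    rw [hvdef, hσ2]
    field_simp
  set s : ℝ := Real.log (1 + t / v) with hsdef
  have htv : 0 < t / v := div_pos ht hv
  have hs : 0 < s := Real.log_pos (by linarith)
  have hexps : Real.exp s = 1 + t / v := Real.exp_log (by linarith)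
  -- integrability of exp(s * X i)
  have hint : ∀ i, Integrable (fun ω => Real.exp (s * X i ω)) μ := by
    intro i
    refine (MemLp.of_bound (((hmeas i).const_mul s).exp).aestronglyMeasurable
      (Real.exp s) ?_).integrable le_rfl
    filter_upwards [hbdd i] with ω hω
    rw [Real.norm_eq_abs, abs_of_pos (Real.exp_pos _), Real.exp_le_exp]
    calc s * X i ω ≤ s * 1 := mul_le_mul_of_nonneg_left ((le_abs_self _).trans hω) hs.le
      _ = s := mul_one s
  have hintsum : Integrable (fun ω => Real.exp (s * (∑ i, X i) ω)) μ :=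
    hindep.integrable_exp_mul_sum hmeas (fun i _ => hint i)
  set g : ℝ := Real.exp s - s - 1 with hg
  -- Chernoff bound
  have step1 : (μ {ω | t < ∑ i, X i ω}).toReal ≤
      Real.exp (-s * t) * mgf (∑ i, X i) μ s := by
    refine le_trans ?_ (measure_ge_le_exp_mul_mgf t hs.le hintsum)
    apply ENNReal.toReal_mono (measure_ne_top _ _)
    apply measure_mono
    intro ω hω
    simp only [Set.mem_setOf_eq, Finset.sum_apply] at *
    exact hω.le
  have step2 : mgf (∑ i, X i) μ s = ∏ i, mgf (X i) μ s := hindep.mgf_sum hmeas Finset.univ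
  have step3 : (∏ i, mgf (X i) μ s) ≤ ∏ i : Fin n, Real.exp (variance (X i) μ * g) := by
    apply Finset.prod_le_prod
    · intro i _; exact mgf_nonneg
    · intro i _; exact mgf_bound μ (X i) (hmeas i) (hmean i) (hbdd i) hs.le
  have step4 : (∏ i : Fin n, Real.exp (variance (X i) μ * g)) = Real.exp (v * g) := by
    rw [← Real.exp_sum, ← Finset.sum_mul, ← hvsum]
  have harith : -s * t + v * g = -v * h (t / v) := by
    have hvt : v * (t / v) = t := mul_div_cancel₀ t hv.ne'
    rw [hh, hg, hexps, ← hsdef]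
    nlinarith [hvt]
  calc (μ {ω | t < ∑ i, X i ω}).toReal
      ≤ Real.exp (-s * t) * mgf (∑ i, X i) μ s := step1
    _ = Real.exp (-s * t) * ∏ i, mgf (X i) μ s := by rw [step2]
    _ ≤ Real.exp (-s * t) * ∏ i : Fin n, Real.exp (variance (X i) μ * g) := by
        exact mul_le_mul_of_nonneg_left step3 (Real.exp_pos _).le
    _ = Real.exp (-s * t) * Real.exp (v * g) := by rw [step4]
    _ = Real.exp (-s * t + v * g) := (Real.exp_add _ _).symm
    _ = Real.exp (-v * h (t / v)) := by rw [harith]
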